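/- arXiv:2001.09780 — 2 statements merged into one kernel-verified Lean document; each statement's English description precedes it below -/
import Mathlib

section
/- Let T(q, q̇, t) = ½ Ẋ^{(M)} · Ẋ be the kinetic energy expressed in generalized coordinates. Then along any C² motion, Q̇ · ∂X/∂qᵢ = d/dt (∂T/∂q̇ᵢ) − ∂T/∂qᵢ for every i = 1,…,n, where Q̇ is the time derivative of the momentum vector Q = Ẋ^{(M)}. -/
open Matrix

open Matrix

variable {n d : ℕ}

/-- The bilinear form u, w ↦ (M u)·w as a continuous linear map. -/
noncomputable def mpBilin (M : Matrix (Fin d) (Fin d) ℝ) :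
    (Fin d → ℝ) →L[ℝ] (Fin d → ℝ) →L[ℝ] ℝ :=
  LinearMap.toContinuousLinearMap
  { toFun := fun u => LinearMap.toContinuousLinearMap
      { toFun := fun w => M.mulVec u ⬝ᵥ w
        map_add' := fun a b => dotProduct_add _ _ _
        map_smul' := fun r a => by simpa using dotProduct_smul r (M.mulVec u) a }
    map_add' := by
      intro a b; ext w
      simp [Matrix.mulVec_add, add_dotProduct]
    map_smul' := by
      intro r a; ext w
      simp [Matrix.mulVec_smul, smul_dotProduct] }

@[simp] lemma mpBilin_apply (M : Matrix (Fin d) (Fin d) ℝ) (u w : Fin d → ℝ) :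
    mpBilin M u w = M.mulVec u ⬝ᵥ w := by
  simp [mpBilin]

lemma mpBilin_symm {M : Matrix (Fin d) (Fin d) ℝ} (hM : M.IsSymm) (u w : Fin d → ℝ) :
    mpBilin M u w = mpBilin M w u := by
  simp only [mpBilin_apply, dotProduct, Matrix.mulVec, Finset.sum_mul, Finset.mul_sum]
  rw [Finset.sum_comm]
  refine Finset.sum_congr rfl fun j _ => Finset.sum_congr rfl fun k _ => ?_
  rw [show M k j = M j k from hM.apply j k]
  ring

lemma sum_single_apply (ℓ : (Fin n → ℝ) →L[ℝ] (Fin d → ℝ)) (v : Fin n → ℝ) :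
    ∑ i : Fin n, v i • ℓ (Pi.single i 1) = ℓ v := by
  have hv : v = ∑ i : Fin n, v i • (Pi.single i 1 : Fin n → ℝ) := by
    funext j
    simp [Pi.single_apply, Finset.sum_apply]
  conv_rhs => rw [hv]
  rw [map_sum]
  simp

lemma fderiv_slice_q (f : (Fin n → ℝ) × ℝ → (Fin d → ℝ)) (q : Fin n → ℝ) (t : ℝ)
    (hf : DifferentiableAt ℝ f (q, t)) :
    fderiv ℝ (fun q' => f (q', t)) q
      = (fderiv ℝ f (q, t)).comp (ContinuousLinearMap.inl ℝ (Fin n → ℝ) ℝ) :=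
  (hf.hasFDerivAt.comp q (hasFDerivAt_prodMk_left q t)).fderiv

lemma fderiv_slice_t (f : (Fin n → ℝ) × ℝ → (Fin d → ℝ)) (q : Fin n → ℝ) (t : ℝ)
    (hf : DifferentiableAt ℝ f (q, t)) :
    fderiv ℝ (fun t' => f (q, t')) t
      = (fderiv ℝ f (q, t)).comp (ContinuousLinearMap.inr ℝ (Fin n → ℝ) ℝ) :=
  (hf.hasFDerivAt.comp t (hasFDerivAt_prodMk_right q t)).fderiv

lemma half_quad_hasFDerivAt {E' : Type*} [NormedAddCommGroup E'] [NormedSpace ℝ E']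
    {M : Matrix (Fin d) (Fin d) ℝ} (hM : M.IsSymm)
    {g : E' → (Fin d → ℝ)} {g' : E' →L[ℝ] (Fin d → ℝ)} {x : E'}
    (hg : HasFDerivAt g g' x) :
    HasFDerivAt (fun y => (1/2 : ℝ) * (M.mulVec (g y) ⬝ᵥ g y))
      ((mpBilin M (g x)).comp g') x := by
  have h1 : HasFDerivAt (fun y => mpBilin M (g y)) ((mpBilin M).comp g') x :=
    (mpBilin M).hasFDerivAt.comp x hg
  have h2 : HasFDerivAt (fun y => mpBilin M (g y) (g y))
      ((mpBilin M (g x)).comp g' + ((mpBilin M).comp g').flip (g x)) x := h1.clm_apply hg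
  have h3 := h2.const_mul (1/2 : ℝ)
  have h4 : HasFDerivAt (fun y => (1/2 : ℝ) * (M.mulVec (g y) ⬝ᵥ g y))
      ((1/2 : ℝ) • ((mpBilin M (g x)).comp g' + ((mpBilin M).comp g').flip (g x))) x := by
    simpa [mpBilin_apply] using h3
  convert h4 using 1
  ext e
  have hs := mpBilin_symm hM (g' e) (g x)
  simp only [ContinuousLinearMap.coe_smul', Pi.smul_apply, ContinuousLinearMap.add_apply,
    ContinuousLinearMap.coe_comp', Function.comp_apply, ContinuousLinearMap.flip_apply,
    smul_eq_mul]
  rw [hs]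
  ring

noncomputable def mulVecCLM (M : Matrix (Fin d) (Fin d) ℝ) :
    (Fin d → ℝ) →L[ℝ] (Fin d → ℝ) :=
  LinearMap.toContinuousLinearMap M.mulVecLin

@[simp] lemma mulVecCLM_apply (M : Matrix (Fin d) (Fin d) ℝ) (u : Fin d → ℝ) :
    mulVecCLM M u = M.mulVec u := by simp [mulVecCLM]

/-- With T(q,q̇,t) = ½ (M Ẋ)·Ẋ the kinetic energy, along any C²
motion, Q̇ · ∂X/∂qᵢ = d/dt(∂T/∂q̇ᵢ) − ∂T/∂qᵢ for every i, where
Q = M Ẋ is the momentum vector. -/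
theorem momentum_projection_eq_lagrange_binomial
    (n d : ℕ)
    (X : (Fin n → ℝ) → ℝ → (Fin d → ℝ))
    (hX : ContDiff ℝ 2 (fun p : (Fin n → ℝ) × ℝ => X p.1 p.2))
    (M : Matrix (Fin d) (Fin d) ℝ) (hM : M.IsSymm) (hMpos : M.PosDef)
    -- the velocity Ẋ as a function of (q, q̇, t)
    (Xvel : (Fin n → ℝ) → (Fin n → ℝ) → ℝ → (Fin d → ℝ))
    (hXvel : ∀ q v t, Xvel q v t =
      (∑ i : Fin n, v i • fderiv ℝ (fun q' => X q' t) q (Pi.single i 1))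
        + fderiv ℝ (fun t' => X q t') t 1)
    -- the kinetic energy
    (T : (Fin n → ℝ) → (Fin n → ℝ) → ℝ → ℝ)
    (hT : ∀ q v t, T q v t = (1 / 2) * (M.mulVec (Xvel q v t) ⬝ᵥ Xvel q v t))
    -- a C² motion
    (c : ℝ → Fin n → ℝ) (hc : ContDiff ℝ 2 c)
    -- the momentum along the motion
    (Q : ℝ → Fin d → ℝ)
    (hQ : ∀ t, Q t = M.mulVec (Xvel (c t) (deriv c t) t)) :
    ∀ (t : ℝ) (i : Fin n),
      deriv Q t ⬝ᵥ fderiv ℝ (fun q' => X q' t) (c t) (Pi.single i 1)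
        = deriv (fun s =>
            fderiv ℝ (fun v' => T (c s) v' s) (deriv c s) (Pi.single i 1)) t
          - fderiv ℝ (fun q' => T q' (deriv c t) t) (c t) (Pi.single i 1) := by
  intro t₀ i
  set F2 := fun p : (Fin n → ℝ) × ℝ => X p.1 p.2 with hF2def
  have hfd : Differentiable ℝ F2 := hX.differentiable two_ne_zero
  have hL : ContDiff ℝ 1 (fderiv ℝ F2) := hX.fderiv_right (by norm_num)
  have hLd : Differentiable ℝ (fderiv ℝ F2) := hL.differentiable one_ne_zero
  -- velocity formula
  have hXv : ∀ q v t, Xvel q v t = fderiv ℝ F2 (q, t) (v, 1) := by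
    intro q v t
    have hq : fderiv ℝ (fun q' => X q' t) q
        = (fderiv ℝ F2 (q, t)).comp (ContinuousLinearMap.inl ℝ (Fin n → ℝ) ℝ) :=
      fderiv_slice_q F2 q t (hfd (q, t))
    have ht : fderiv ℝ (fun t' => X q t') t
        = (fderiv ℝ F2 (q, t)).comp (ContinuousLinearMap.inr ℝ (Fin n → ℝ) ℝ) :=
      fderiv_slice_t F2 q t (hfd (q, t))
    rw [hXvel, hq, ht,
      sum_single_apply ((fderiv ℝ F2 (q, t)).comp (ContinuousLinearMap.inl ℝ (Fin n → ℝ) ℝ)) v]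
    simp only [ContinuousLinearMap.coe_comp', Function.comp_apply,
      ContinuousLinearMap.inl_apply, ContinuousLinearMap.inr_apply]
    rw [← map_add]
    norm_num
  -- curve facts
  have hcd : Differentiable ℝ c := hc.differentiable two_ne_zero
  have hc'1 : ContDiff ℝ 1 (deriv c) := by
    have h := hc.fderiv_right (m := 1) (by norm_num)
    have heq : deriv c = fun s => fderiv ℝ c s 1 := by
      funext s; rw [fderiv_apply_one_eq_deriv]
    rw [heq]
    exact h.clm_apply contDiff_const
  have hc'd : Differentiable ℝ (deriv c) := hc'1.differentiable one_ne_zero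
  -- the curve in extended configuration space
  have hγt : ∀ s : ℝ, HasDerivAt (fun s' => ((c s', s') : (Fin n → ℝ) × ℝ)) (deriv c s, 1) s :=
    fun s => ((hcd s).hasDerivAt).prodMk (hasDerivAt_id s)
  -- derivative of s ↦ fderiv F2 (c s, s)
  have hLγ : HasDerivAt (fun s => fderiv ℝ F2 (c s, s))
      (fderiv ℝ (fderiv ℝ F2) (c t₀, t₀) (deriv c t₀, 1)) t₀ :=
    HasFDerivAt.comp_hasDerivAt (l := fderiv ℝ F2) (f := fun s' => (c s', s')) t₀
      (hLd (c t₀, t₀)).hasFDerivAt (hγt t₀)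
  -- velocity along the curve and its derivative
  have hu : HasDerivAt (fun s => ((deriv c s, 1) : (Fin n → ℝ) × ℝ))
      (deriv (deriv c) t₀, 0) t₀ := by
    have h0 : HasDerivAt (fun _ : ℝ => (1:ℝ)) 0 t₀ := hasDerivAt_const t₀ 1
    exact ((hc'd t₀).hasDerivAt).prodMk h0
  have hVd := hLγ.clm_apply hu
  -- hVd : HasDerivAt (fun s => fderiv ℝ F2 (c s, s) (deriv c s, 1)) V' t₀
  set V' := fderiv ℝ (fderiv ℝ F2) (c t₀, t₀) (deriv c t₀, 1) (deriv c t₀, 1)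
      + fderiv ℝ F2 (c t₀, t₀) (deriv (deriv c) t₀, 0) with hV'def
  -- W along the curve and its derivative
  have hWd := hLγ.clm_apply
    (hasDerivAt_const t₀ ((Pi.single i 1, 0) : (Fin n → ℝ) × ℝ))
  have hWd' : HasDerivAt (fun s => fderiv ℝ F2 (c s, s) (Pi.single i 1, 0))
      (fderiv ℝ (fderiv ℝ F2) (c t₀, t₀) (deriv c t₀, 1) (Pi.single i 1, 0)) t₀ := by
    simpa using hWd
  -- momentum
  have hQV : Q = fun s => M.mulVec (fderiv ℝ F2 (c s, s) (deriv c s, 1)) :=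
    funext fun s => by rw [hQ, hXv]
  have hQd : HasDerivAt Q (M.mulVec V') t₀ := by
    rw [hQV]
    have h2 := HasFDerivAt.comp_hasDerivAt (l := fun u => (mulVecCLM M) u)
      (f := fun s => fderiv ℝ F2 (c s, s) (deriv c s, 1)) t₀
      (mulVecCLM M).hasFDerivAt hVd
    simpa [Function.comp_def] using h2
  -- ∂T/∂v formula
  have hTv : ∀ q v t, fderiv ℝ (fun v' => T q v' t) v
      = (mpBilin M (fderiv ℝ F2 (q, t) (v, 1))).comp
          ((fderiv ℝ F2 (q, t)).comp (ContinuousLinearMap.inl ℝ (Fin n → ℝ) ℝ)) := by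
    intro q v t
    have hfun : (fun v' => T q v' t)
        = fun v' => (1/2 : ℝ) * (M.mulVec (fderiv ℝ F2 (q, t) (v', 1)) ⬝ᵥ
            fderiv ℝ F2 (q, t) (v', 1)) := by
      funext v'; rw [hT, hXv]
    rw [hfun]
    have hg : HasFDerivAt (fun v' : Fin n → ℝ => fderiv ℝ F2 (q, t) (v', 1))
        ((fderiv ℝ F2 (q, t)).comp (ContinuousLinearMap.inl ℝ (Fin n → ℝ) ℝ)) v :=
      (fderiv ℝ F2 (q, t)).hasFDerivAt.comp v (hasFDerivAt_prodMk_left v (1:ℝ))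
    exact (half_quad_hasFDerivAt hM hg).fderiv
  -- rewrite the ∂T/∂v term along the motion
  have hfun2 : (fun s => fderiv ℝ (fun v' => T (c s) v' s) (deriv c s) (Pi.single i 1))
      = fun s => mpBilin M (fderiv ℝ F2 (c s, s) (deriv c s, 1))
          (fderiv ℝ F2 (c s, s) (Pi.single i 1, 0)) := by
    funext s
    rw [hTv]
    simp
  -- its time derivative
  have hφ : HasDerivAt (fun s => mpBilin M (fderiv ℝ F2 (c s, s) (deriv c s, 1))
        (fderiv ℝ F2 (c s, s) (Pi.single i 1, 0)))
      (mpBilin M V' (fderiv ℝ F2 (c t₀, t₀) (Pi.single i 1, 0))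
        + mpBilin M (fderiv ℝ F2 (c t₀, t₀) (deriv c t₀, 1))
            (fderiv ℝ (fderiv ℝ F2) (c t₀, t₀) (deriv c t₀, 1) (Pi.single i 1, 0))) t₀ := by
    have h1 : HasDerivAt (fun s => mpBilin M (fderiv ℝ F2 (c s, s) (deriv c s, 1)))
        (mpBilin M V') t₀ :=
      HasFDerivAt.comp_hasDerivAt (l := fun u => mpBilin M u)
        (f := fun s => fderiv ℝ F2 (c s, s) (deriv c s, 1)) t₀
        (mpBilin M).hasFDerivAt hVd
    exact h1.clm_apply hWd'
  -- ∂T/∂q term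
  have hTq : fderiv ℝ (fun q' => T q' (deriv c t₀) t₀) (c t₀) (Pi.single i 1)
      = mpBilin M (fderiv ℝ F2 (c t₀, t₀) (deriv c t₀, 1))
          (fderiv ℝ (fderiv ℝ F2) (c t₀, t₀) (Pi.single i 1, 0) (deriv c t₀, 1)) := by
    have hfun : (fun q' => T q' (deriv c t₀) t₀)
        = fun q' => (1/2 : ℝ) * (M.mulVec (fderiv ℝ F2 (q', t₀) (deriv c t₀, 1)) ⬝ᵥ
            fderiv ℝ F2 (q', t₀) (deriv c t₀, 1)) := by
      funext q'; rw [hT, hXv]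
    have hLq : HasFDerivAt (fun q' : Fin n → ℝ => fderiv ℝ F2 (q', t₀))
        ((fderiv ℝ (fderiv ℝ F2) (c t₀, t₀)).comp (ContinuousLinearMap.inl ℝ (Fin n → ℝ) ℝ))
        (c t₀) :=
      (hLd (c t₀, t₀)).hasFDerivAt.comp (c t₀) (hasFDerivAt_prodMk_left (c t₀) t₀)
    have hg := hLq.clm_apply
      (hasFDerivAt_const ((deriv c t₀, 1) : (Fin n → ℝ) × ℝ) (c t₀))
    rw [hfun]
    rw [(half_quad_hasFDerivAt hM hg).fderiv]
    simp
  -- Clairaut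
  have hsym : fderiv ℝ (fderiv ℝ F2) (c t₀, t₀) (deriv c t₀, 1) (Pi.single i 1, 0)
      = fderiv ℝ (fderiv ℝ F2) (c t₀, t₀) (Pi.single i 1, 0) (deriv c t₀, 1) :=
    (hX.contDiffAt.isSymmSndFDerivAt (by simp [minSmoothness_of_isRCLikeNormedField])).eq _ _
  -- assemble
  have hslice : fderiv ℝ (fun q' => X q' t₀) (c t₀) (Pi.single i 1)
      = fderiv ℝ F2 (c t₀, t₀) (Pi.single i 1, 0) := by
    rw [fderiv_slice_q F2 (c t₀) t₀ (hfd (c t₀, t₀))]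
    simp
  rw [hslice, hfun2, hφ.deriv, hQd.deriv, hTq, hsym]
  simp only [mpBilin_apply]
  ring
end

section
/- (Equivalence of the projected-Newton and Voronec forms.) Let T, T*, α_ν be C² with T* the constrained kinetic energy, and define B_i^ν as in the nonlinear Voronec equations. Then along any C² motion satisfying the constraints, for each i = 1,…,m: d/dt(∂T/∂q̇ᵢ) − ∂T/∂qᵢ + Σ_{ν=1}^k (∂α_ν/∂q̇ᵢ) ( d/dt(∂T/∂q̇_{m+ν}) − ∂T/∂q_{m+ν} ) = d/dt(∂T*/∂q̇ᵢ) − ∂T*/∂qᵢ − Σ_{ν=1}^k (∂T*/∂q_{m+ν}) (∂α_ν/∂q̇ᵢ) − Σ_{ν=1}^k B_i^ν (∂T/∂q̇_{m+ν}), where derivatives of T are evaluated at q̇_{m+ν} = α_ν. -/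
open ContinuousLinearMap

section aux
variable {E F : Type*} [NormedAddCommGroup E] [NormedSpace ℝ E]
  [NormedAddCommGroup F] [NormedSpace ℝ F]

/-- master chain rule along a curve into E × F × ℝ -/
lemma hasDerivAt_comp3 (H : E × F × ℝ → ℝ) {Q : ℝ → E} {V : ℝ → F} {g : ℝ → ℝ}
    {Q' : E} {V' : F} {g' : ℝ} {ε₀ : ℝ}
    (hQ : HasDerivAt Q Q' ε₀) (hV : HasDerivAt V V' ε₀) (hg : HasDerivAt g g' ε₀)
    (h : DifferentiableAt ℝ H (Q ε₀, V ε₀, g ε₀)) :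
    HasDerivAt (fun ε => H (Q ε, V ε, g ε))
      (fderiv ℝ H (Q ε₀, V ε₀, g ε₀) (Q', V', g')) ε₀ := by
  exact (h.hasFDerivAt.comp_hasDerivAt ε₀ (hQ.prodMk (hV.prodMk hg)))

lemma hasFDerivAt_slice1 (H : E × F × ℝ → ℝ) (q : E) (u : F) (τ : ℝ)
    (h : DifferentiableAt ℝ H (q, u, τ)) :
    HasFDerivAt (fun q' => H (q', u, τ))
      ((fderiv ℝ H (q, u, τ)).comp ((ContinuousLinearMap.id ℝ E).prod 0)) q := by
  exact h.hasFDerivAt.comp q ((hasFDerivAt_id q).prodMk (hasFDerivAt_const (u, τ) q))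

lemma fderiv_slice1 (H : E × F × ℝ → ℝ) (q : E) (u : F) (τ : ℝ)
    (h : DifferentiableAt ℝ H (q, u, τ)) (e : E) :
    fderiv ℝ (fun q' => H (q', u, τ)) q e = fderiv ℝ H (q, u, τ) (e, 0, 0) := by
  rw [(hasFDerivAt_slice1 H q u τ h).fderiv]; rfl

lemma hasFDerivAt_slice2 (H : E × F × ℝ → ℝ) (q : E) (u : F) (τ : ℝ)
    (h : DifferentiableAt ℝ H (q, u, τ)) :
    HasFDerivAt (fun u' => H (q, u', τ))
      ((fderiv ℝ H (q, u, τ)).comp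
        ((0 : F →L[ℝ] E).prod ((ContinuousLinearMap.id ℝ F).prod 0))) u := by
  exact h.hasFDerivAt.comp u
    ((hasFDerivAt_const q u).prodMk ((hasFDerivAt_id u).prodMk (hasFDerivAt_const τ u)))

lemma fderiv_slice2 (H : E × F × ℝ → ℝ) (q : E) (u : F) (τ : ℝ)
    (h : DifferentiableAt ℝ H (q, u, τ)) (e : F) :
    fderiv ℝ (fun u' => H (q, u', τ)) u e = fderiv ℝ H (q, u, τ) (0, e, 0) := by
  rw [(hasFDerivAt_slice2 H q u τ h).fderiv]; rfl

lemma deriv_slice3 (H : E × F × ℝ → ℝ) (q : E) (u : F) (τ : ℝ)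
    (h : DifferentiableAt ℝ H (q, u, τ)) :
    deriv (fun τ' => H (q, u, τ')) τ = fderiv ℝ H (q, u, τ) (0, 0, 1) := by
  exact (hasDerivAt_comp3 H (hasDerivAt_const τ q) (hasDerivAt_const τ u)
    (hasDerivAt_id τ) h).deriv

lemma differentiableAt_slice2 (H : E × F × ℝ → ℝ) (q : E) (u : F) (τ : ℝ)
    (h : DifferentiableAt ℝ H (q, u, τ)) :
    DifferentiableAt ℝ (fun u' => H (q, u', τ)) u :=
  (hasFDerivAt_slice2 H q u τ h).differentiableAt

lemma differentiableAt_slice1 (H : E × F × ℝ → ℝ) (q : E) (u : F) (τ : ℝ)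
    (h : DifferentiableAt ℝ H (q, u, τ)) :
    DifferentiableAt ℝ (fun q' => H (q', u, τ)) q :=
  (hasFDerivAt_slice1 H q u τ h).differentiableAt

/-- C¹-smoothness of x ↦ fderiv H x w for C² H. -/
lemma contDiff_one_fderiv_apply (H : E × F × ℝ → ℝ) (hH : ContDiff ℝ 2 H)
    (w : E × F × ℝ) : ContDiff ℝ 1 (fun x => fderiv ℝ H x w) :=
  (hH.fderiv_right (by norm_num)).clm_apply contDiff_const

/-- fderiv of the line ε ↦ u + ε • e. -/
lemma hasDerivAt_line (u e : F) (ε₀ : ℝ) :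
    HasDerivAt (fun ε : ℝ => u + ε • e) e ε₀ := by
  simpa using ((hasDerivAt_id ε₀).smul_const e).const_add u

lemma line_fderiv {g : F → ℝ} {u : F} (h : DifferentiableAt ℝ g u) (e : F) :
    fderiv ℝ g u e = deriv (fun ε : ℝ => g (u + ε • e)) 0 := by
  have h1 : HasDerivAt (fun ε : ℝ => g (u + ε • e)) (fderiv ℝ g u e) 0 := by
    have h' : HasFDerivAt g (fderiv ℝ g u) (u + (0:ℝ) • e) := by
      simpa using h.hasFDerivAt
    exact h'.comp_hasDerivAt 0 (hasDerivAt_line u e 0)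
  exact h1.deriv.symm

end aux

section pidecomp

lemma clm_apply_pi {ι : Type*} [Fintype ι] [DecidableEq ι]
    (φ : (ι → ℝ) →L[ℝ] ℝ) (v : ι → ℝ) :
    φ v = ∑ i, v i * φ (Pi.single i 1) := by
  have hv : v = ∑ i, v i • (Pi.single i 1 : ι → ℝ) := by
    conv_lhs => rw [pi_eq_sum_univ v]
    refine Finset.sum_congr rfl fun i _ => ?_
    congr 1
    ext j
    simp [Pi.single_apply, eq_comm]
  conv_lhs => rw [hv]
  simp [map_sum]

lemma clm_apply_append {m k : ℕ} (φ : (Fin (m + k) → ℝ) →L[ℝ] ℝ)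
    (w₁ : Fin m → ℝ) (w₂ : Fin k → ℝ) :
    φ (Fin.append w₁ w₂) =
      ∑ r : Fin m, w₁ r * φ (Pi.single (Fin.castAdd k r) 1)
      + ∑ ν : Fin k, w₂ ν * φ (Pi.single (Fin.natAdd m ν) 1) := by
  rw [clm_apply_pi φ (Fin.append w₁ w₂), Fin.sum_univ_add]
  simp [Fin.append_left, Fin.append_right]

lemma clm_apply_single_pi {ι : Type*} [Fintype ι] [DecidableEq ι]
    (φ : (ι → ℝ) →L[ℝ] ℝ) (i : ι) :
    ∑ r, (Pi.single i 1 : ι → ℝ) r * φ (Pi.single r 1) = φ (Pi.single i 1) := by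
  rw [← clm_apply_pi]

end pidecomp


lemma voronec_algebra (k : ℕ) (dpI fqi : ℝ) (a dp dA R fq p : Fin k → ℝ)
    (Q : Fin k → Fin k → ℝ) :
    dpI - fqi + ∑ ν, a ν * (dp ν - fq ν)
    = (dpI + ∑ ν, (dA ν * p ν + a ν * dp ν)) - (fqi + ∑ ν, R ν * p ν)
      - ∑ ν, (fq ν + ∑ μ, Q ν μ * p μ) * a ν
      - ∑ ν, (dA ν - R ν - ∑ μ, a μ * Q μ ν) * p ν := by
  have hswap : ∑ ν, (∑ μ, Q ν μ * p μ) * a ν = ∑ ν : Fin k, (∑ μ, a μ * Q μ ν) * p ν := by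
    simp only [Finset.sum_mul]
    rw [Finset.sum_comm]
    apply Finset.sum_congr rfl; intro ν _
    apply Finset.sum_congr rfl; intro μ _
    ring
  simp only [add_mul, sub_mul, mul_sub, Finset.sum_add_distrib, Finset.sum_sub_distrib]
  rw [hswap]
  have h2 : ∑ ν, fq ν * a ν = ∑ ν, a ν * fq ν := by
    apply Finset.sum_congr rfl; intro ν _; ring
  rw [h2]
  ring



lemma sum_single_mul {ι : Type*} [Fintype ι] [DecidableEq ι] (i : ι) (f : ι → ℝ) :
    ∑ r, (Pi.single i 1 : ι → ℝ) r * f r = f i := by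
  simp [Pi.single_apply]

/-- Equivalence of the projected-Newton and Voronec forms:
along a C² motion satisfying the constraints, for each i = 1,…,m,
d/dt(∂T/∂q̇ᵢ) − ∂T/∂qᵢ + Σ_ν (∂α_ν/∂q̇ᵢ)(d/dt(∂T/∂q̇_{m+ν}) − ∂T/∂q_{m+ν})
 = d/dt(∂T*/∂q̇ᵢ) − ∂T*/∂qᵢ − Σ_ν (∂T*/∂q_{m+ν})(∂α_ν/∂q̇ᵢ)
   − Σ_ν B_i^ν ∂T/∂q̇_{m+ν}. -/
theorem projected_newton_eq_voronec_form
    (m k : ℕ)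
    (T : (Fin (m + k) → ℝ) → (Fin (m + k) → ℝ) → ℝ → ℝ)
    (hT : ContDiff ℝ 2
      (fun p : (Fin (m + k) → ℝ) × (Fin (m + k) → ℝ) × ℝ => T p.1 p.2.1 p.2.2))
    (α : Fin k → (Fin (m + k) → ℝ) → (Fin m → ℝ) → ℝ → ℝ)
    (hα : ∀ ν, ContDiff ℝ 2
      (fun p : (Fin (m + k) → ℝ) × (Fin m → ℝ) × ℝ => α ν p.1 p.2.1 p.2.2))
    -- the constrained kinetic energy
    (Tstar : (Fin (m + k) → ℝ) → (Fin m → ℝ) → ℝ → ℝ)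
    (hTstar : ∀ q u t, Tstar q u t = T q (Fin.append u (fun ν => α ν q u t)) t)
    -- a C² motion
    (c : ℝ → Fin (m + k) → ℝ) (hc : ContDiff ℝ 2 c)
    (vpart : ℝ → Fin m → ℝ)
    (hvpart : ∀ t i, vpart t i = deriv c t (Fin.castAdd k i))
    -- the motion satisfies the constraints
    (hconstr : ∀ t ν, deriv c t (Fin.natAdd m ν) = α ν (c t) (vpart t) t)
    (t : ℝ)
    -- the nonlinear Voronec coefficients B_i^ν at time t
    (B : Fin m → Fin k → ℝ)
    (hB : ∀ i ν, B i ν =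
      (∑ r : Fin m,
        ((fderiv ℝ (fun q' =>
             fderiv ℝ (fun v' => α ν q' v' t) (vpart t) (Pi.single i 1))
           (c t) (Pi.single (Fin.castAdd k r) 1)) * vpart t r
         + (fderiv ℝ (fun v' =>
              fderiv ℝ (fun v'' => α ν (c t) v'' t) v' (Pi.single i 1))
            (vpart t) (Pi.single r 1))
            * deriv (fun τ => deriv c τ (Fin.castAdd k r)) t))
      - fderiv ℝ (fun q' => α ν q' (vpart t) t) (c t) (Pi.single (Fin.castAdd k i) 1)
      + (∑ μ : Fin k,
          ((fderiv ℝ (fun q' =>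
               fderiv ℝ (fun v' => α ν q' v' t) (vpart t) (Pi.single i 1))
             (c t) (Pi.single (Fin.natAdd m μ) 1)) * α μ (c t) (vpart t) t
           - (fderiv ℝ (fun v' => α μ (c t) v' t) (vpart t) (Pi.single i 1))
               * fderiv ℝ (fun q' => α ν q' (vpart t) t) (c t)
                   (Pi.single (Fin.natAdd m μ) 1)))
      + deriv (fun t' =>
          fderiv ℝ (fun v' => α ν (c t) v' t') (vpart t) (Pi.single i 1)) t) :
    ∀ i : Fin m,
      deriv (fun s =>
          fderiv ℝ (fun v' => T (c s) v' s) (deriv c s)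
            (Pi.single (Fin.castAdd k i) 1)) t
      - fderiv ℝ (fun q' => T q' (deriv c t) t) (c t) (Pi.single (Fin.castAdd k i) 1)
      + ∑ ν : Fin k,
          (fderiv ℝ (fun v' => α ν (c t) v' t) (vpart t) (Pi.single i 1))
            * (deriv (fun s =>
                  fderiv ℝ (fun v' => T (c s) v' s) (deriv c s)
                    (Pi.single (Fin.natAdd m ν) 1)) t
               - fderiv ℝ (fun q' => T q' (deriv c t) t) (c t)
                   (Pi.single (Fin.natAdd m ν) 1))
      =
      deriv (fun s =>
          fderiv ℝ (fun u' => Tstar (c s) u' s) (vpart s) (Pi.single i 1)) t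
      - fderiv ℝ (fun q' => Tstar q' (vpart t) t) (c t) (Pi.single (Fin.castAdd k i) 1)
      - ∑ ν : Fin k,
          (fderiv ℝ (fun q' => Tstar q' (vpart t) t) (c t)
              (Pi.single (Fin.natAdd m ν) 1))
            * fderiv ℝ (fun v' => α ν (c t) v' t) (vpart t) (Pi.single i 1)
      - ∑ ν : Fin k,
          B i ν * fderiv ℝ (fun v' => T (c t) v' t) (deriv c t)
            (Pi.single (Fin.natAdd m ν) 1) := by

  intro i
  -- abbreviations (inline): TU := uncurried T, GU ν := uncurried α ν
  have hTd : Differentiable ℝ (fun p : (Fin (m + k) → ℝ) × (Fin (m + k) → ℝ) × ℝ => T p.1 p.2.1 p.2.2) := hT.differentiable (by norm_num)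
  have hαd : ∀ ν, Differentiable ℝ (fun p : (Fin (m + k) → ℝ) × (Fin m → ℝ) × ℝ => α ν p.1 p.2.1 p.2.2) := fun ν => (hα ν).differentiable (by norm_num)
  have hcd : Differentiable ℝ c := hc.differentiable (by norm_num)
  have hc1 : ContDiff ℝ 1 (deriv c) := by
    have h2 : ContDiff ℝ ((1 : WithTop ℕ∞) + 1) c := by
      have e2 : ((1 : WithTop ℕ∞) + 1) = 2 := by norm_num
      rw [e2]; exact hc
    exact (contDiff_succ_iff_deriv.mp h2).2.2
  have hdcd : Differentiable ℝ (deriv c) := hc1.differentiable one_ne_zero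
  have hvpd : ∀ r, Differentiable ℝ (fun s => vpart s r) := by
    intro r
    have : (fun s => vpart s r) = fun s => deriv c s (Fin.castAdd k r) := funext fun s => hvpart s r
    rw [this]
    exact (ContinuousLinearMap.proj (R := ℝ) (φ := fun _ : Fin (m+k) => ℝ)
      (Fin.castAdd k r)).differentiable.comp hdcd
  have hvpD : Differentiable ℝ vpart := differentiable_pi.mpr hvpd
  have hu2 : HasDerivAt vpart (fun r => deriv (fun τ => deriv c τ (Fin.castAdd k r)) t) t := by
    rw [hasDerivAt_pi]
    intro r
    have hd : DifferentiableAt ℝ (fun s => deriv c s (Fin.castAdd k r)) t :=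
      ((ContinuousLinearMap.proj (R := ℝ) (φ := fun _ : Fin (m+k) => ℝ)
        (Fin.castAdd k r)).differentiable.comp hdcd) t
    have := hd.hasDerivAt
    simpa only [hvpart] using this
  have hder : ∀ s, deriv c s = Fin.append (vpart s) (fun ν => α ν (c s) (vpart s) s) := by
    intro s; funext j
    refine Fin.addCases (fun r => ?_) (fun ν => ?_) j
    · rw [Fin.append_left]; exact (hvpart s r).symm
    · rw [Fin.append_right]; exact hconstr s ν
  -- momenta as full derivatives
  have hps : ∀ (s : ℝ) (j : Fin (m + k)),
      fderiv ℝ (fun v' => T (c s) v' s) (deriv c s) (Pi.single j 1)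
      = fderiv ℝ (fun p : (Fin (m + k) → ℝ) × (Fin (m + k) → ℝ) × ℝ => T p.1 p.2.1 p.2.2) (c s, deriv c s, s) (0, Pi.single j 1, 0) :=
    fun s j => fderiv_slice2 (fun p : (Fin (m + k) → ℝ) × (Fin (m + k) → ℝ) × ℝ => T p.1 p.2.1 p.2.2) (c s) (deriv c s) s (hTd _) _
  have has : ∀ (s : ℝ) (ν : Fin k),
      fderiv ℝ (fun v' => α ν (c s) v' s) (vpart s) (Pi.single i 1)
      = fderiv ℝ (fun p : (Fin (m + k) → ℝ) × (Fin m → ℝ) × ℝ => α ν p.1 p.2.1 p.2.2) (c s, vpart s, s) (0, Pi.single i 1, 0) :=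
    fun s ν => fderiv_slice2 (fun p : (Fin (m + k) → ℝ) × (Fin m → ℝ) × ℝ => α ν p.1 p.2.1 p.2.2) (c s) (vpart s) s (hαd ν _) _
  have hfq : ∀ (j : Fin (m + k)),
      fderiv ℝ (fun q' => T q' (deriv c t) t) (c t) (Pi.single j 1)
      = fderiv ℝ (fun p : (Fin (m + k) → ℝ) × (Fin (m + k) → ℝ) × ℝ => T p.1 p.2.1 p.2.2) (c t, deriv c t, t) (Pi.single j 1, 0, 0) :=
    fun j => fderiv_slice1 (fun p : (Fin (m + k) → ℝ) × (Fin (m + k) → ℝ) × ℝ => T p.1 p.2.1 p.2.2) (c t) (deriv c t) t (hTd _) _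
  -- Claim 1: constrained momentum decomposition, for every s
  have claim1 : ∀ s : ℝ,
      fderiv ℝ (fun u' => Tstar (c s) u' s) (vpart s) (Pi.single i 1)
      = fderiv ℝ (fun p : (Fin (m + k) → ℝ) × (Fin (m + k) → ℝ) × ℝ => T p.1 p.2.1 p.2.2) (c s, deriv c s, s) (0, Pi.single (Fin.castAdd k i) 1, 0)
        + ∑ ν : Fin k,
            fderiv ℝ (fun p : (Fin (m + k) → ℝ) × (Fin m → ℝ) × ℝ => α ν p.1 p.2.1 p.2.2) (c s, vpart s, s) (0, Pi.single i 1, 0)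
            * fderiv ℝ (fun p : (Fin (m + k) → ℝ) × (Fin (m + k) → ℝ) × ℝ => T p.1 p.2.1 p.2.2) (c s, deriv c s, s) (0, Pi.single (Fin.natAdd m ν) 1, 0) := by
    intro s
    have hApp : ∀ u' : Fin m → ℝ, DifferentiableAt ℝ
        (fun w : Fin m → ℝ => Fin.append w (fun ν => α ν (c s) w s)) u' := by
      intro u'
      rw [differentiableAt_pi]
      intro j
      refine Fin.addCases (fun r => ?_) (fun ν => ?_) j
      · simp only [Fin.append_left]
        exact (ContinuousLinearMap.proj (R := ℝ) (φ := fun _ : Fin m => ℝ) r).differentiableAt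
      · simp only [Fin.append_right]
        exact differentiableAt_slice2 (fun p : (Fin (m + k) → ℝ) × (Fin m → ℝ) × ℝ => α ν p.1 p.2.1 p.2.2) (c s) u' s (hαd ν _)
    have hg : DifferentiableAt ℝ (fun u' => Tstar (c s) u' s) (vpart s) := by
      have hgeq : (fun u' => Tstar (c s) u' s)
          = fun u' => (fun p : (Fin (m + k) → ℝ) × (Fin (m + k) → ℝ) × ℝ => T p.1 p.2.1 p.2.2) (c s, Fin.append u' (fun ν => α ν (c s) u' s), s) :=
        funext fun u' => hTstar (c s) u' s
      rw [hgeq]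
      exact (hTd _).comp _
        ((differentiableAt_const _).prodMk ((hApp _).prodMk (differentiableAt_const _)))
    rw [line_fderiv hg (Pi.single i 1)]
    have h0 : vpart s + (0:ℝ) • (Pi.single i 1 : Fin m → ℝ) = vpart s := by simp
    have hVd : HasDerivAt
        (fun ε : ℝ => Fin.append (vpart s + ε • (Pi.single i 1 : Fin m → ℝ))
           (fun ν => α ν (c s) (vpart s + ε • (Pi.single i 1 : Fin m → ℝ)) s))
        (Fin.append (Pi.single i 1 : Fin m → ℝ)
           (fun ν => fderiv ℝ (fun p : (Fin (m + k) → ℝ) × (Fin m → ℝ) × ℝ => α ν p.1 p.2.1 p.2.2) (c s, vpart s, s) (0, Pi.single i 1, 0))) 0 := by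
      rw [hasDerivAt_pi]
      intro j
      refine Fin.addCases (fun r => ?_) (fun ν => ?_) j
      · simp only [Fin.append_left, Pi.add_apply, Pi.smul_apply, smul_eq_mul]
        simpa using
          (((hasDerivAt_id (0:ℝ)).mul_const ((Pi.single i 1 : Fin m → ℝ) r)).const_add
            (vpart s r))
      · simp only [Fin.append_right]
        have := hasDerivAt_comp3 (fun p : (Fin (m + k) → ℝ) × (Fin m → ℝ) × ℝ => α ν p.1 p.2.1 p.2.2) (hasDerivAt_const 0 (c s))
          (hasDerivAt_line (vpart s) (Pi.single i 1) 0) (hasDerivAt_const 0 s)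
          (by rw [h0]; exact hαd ν _)
        rw [h0] at this
        exact this
    have hVpt : Fin.append (vpart s + (0:ℝ) • (Pi.single i 1 : Fin m → ℝ))
        (fun ν => α ν (c s) (vpart s + (0:ℝ) • (Pi.single i 1 : Fin m → ℝ)) s) = deriv c s := by
      rw [h0]; exact (hder s).symm
    have hmain := hasDerivAt_comp3 (fun p : (Fin (m + k) → ℝ) × (Fin (m + k) → ℝ) × ℝ => T p.1 p.2.1 p.2.2) (hasDerivAt_const 0 (c s)) hVd (hasDerivAt_const 0 s)
      (by rw [hVpt]; exact hTd _)
    rw [hVpt] at hmain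
    have hfeq : (fun ε : ℝ => Tstar (c s) (vpart s + ε • (Pi.single i 1 : Fin m → ℝ)) s)
        = fun ε : ℝ => (fun p : (Fin (m + k) → ℝ) × (Fin (m + k) → ℝ) × ℝ => T p.1 p.2.1 p.2.2) (c s, Fin.append (vpart s + ε • (Pi.single i 1 : Fin m → ℝ))
            (fun ν => α ν (c s) (vpart s + ε • (Pi.single i 1 : Fin m → ℝ)) s), s) :=
      funext fun ε => hTstar _ _ _
    rw [hfeq, hmain.deriv]
    have hψ : ∀ w : Fin (m + k) → ℝ,
        fderiv ℝ (fun p : (Fin (m + k) → ℝ) × (Fin (m + k) → ℝ) × ℝ => T p.1 p.2.1 p.2.2) (c s, deriv c s, s) ((0 : Fin (m+k) → ℝ), w, (0:ℝ))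
        = ((fderiv ℝ (fun p : (Fin (m + k) → ℝ) × (Fin (m + k) → ℝ) × ℝ => T p.1 p.2.1 p.2.2) (c s, deriv c s, s)).comp
            ((0 : (Fin (m+k) → ℝ) →L[ℝ] (Fin (m+k) → ℝ)).prod
              ((ContinuousLinearMap.id ℝ (Fin (m+k) → ℝ)).prod
                (0 : (Fin (m+k) → ℝ) →L[ℝ] ℝ)))) w := fun w => rfl
    rw [hψ, clm_apply_append, sum_single_mul]
    rfl
  -- Claim 2: constrained force decomposition at time t, any coordinate direction
  have claim2 : ∀ j : Fin (m + k),
      fderiv ℝ (fun q' => Tstar q' (vpart t) t) (c t) (Pi.single j 1)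
      = fderiv ℝ (fun p : (Fin (m + k) → ℝ) × (Fin (m + k) → ℝ) × ℝ => T p.1 p.2.1 p.2.2) (c t, deriv c t, t) (Pi.single j 1, 0, 0)
        + ∑ ν : Fin k,
            fderiv ℝ (fun p : (Fin (m + k) → ℝ) × (Fin m → ℝ) × ℝ => α ν p.1 p.2.1 p.2.2) (c t, vpart t, t) (Pi.single j 1, 0, 0)
            * fderiv ℝ (fun p : (Fin (m + k) → ℝ) × (Fin (m + k) → ℝ) × ℝ => T p.1 p.2.1 p.2.2) (c t, deriv c t, t) (0, Pi.single (Fin.natAdd m ν) 1, 0) := by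
    intro j
    have hApp : ∀ q' : Fin (m + k) → ℝ, DifferentiableAt ℝ
        (fun w : Fin (m + k) → ℝ => Fin.append (vpart t) (fun ν => α ν w (vpart t) t)) q' := by
      intro q'
      rw [differentiableAt_pi]
      intro j'
      refine Fin.addCases (fun r => ?_) (fun ν => ?_) j'
      · simp only [Fin.append_left]
        exact differentiableAt_const _
      · simp only [Fin.append_right]
        exact differentiableAt_slice1 (fun p : (Fin (m + k) → ℝ) × (Fin m → ℝ) × ℝ => α ν p.1 p.2.1 p.2.2) q' (vpart t) t (hαd ν _)
    have hg : DifferentiableAt ℝ (fun q' => Tstar q' (vpart t) t) (c t) := by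
      have hgeq : (fun q' => Tstar q' (vpart t) t)
          = fun q' => (fun p : (Fin (m + k) → ℝ) × (Fin (m + k) → ℝ) × ℝ => T p.1 p.2.1 p.2.2) (q', Fin.append (vpart t) (fun ν => α ν q' (vpart t) t), t) :=
        funext fun q' => hTstar q' (vpart t) t
      rw [hgeq]
      exact (hTd _).comp _
        (differentiableAt_id.prodMk ((hApp _).prodMk (differentiableAt_const _)))
    rw [line_fderiv hg (Pi.single j 1)]
    have h0 : c t + (0:ℝ) • (Pi.single j 1 : Fin (m+k) → ℝ) = c t := by simp
    have hVd : HasDerivAt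
        (fun ε : ℝ => Fin.append (vpart t)
           (fun ν => α ν (c t + ε • (Pi.single j 1 : Fin (m+k) → ℝ)) (vpart t) t))
        (Fin.append (0 : Fin m → ℝ)
           (fun ν => fderiv ℝ (fun p : (Fin (m + k) → ℝ) × (Fin m → ℝ) × ℝ => α ν p.1 p.2.1 p.2.2) (c t, vpart t, t) (Pi.single j 1, 0, 0))) 0 := by
      rw [hasDerivAt_pi]
      intro j'
      refine Fin.addCases (fun r => ?_) (fun ν => ?_) j'
      · simp only [Fin.append_left]
        simpa using hasDerivAt_const (0:ℝ) (vpart t r)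
      · simp only [Fin.append_right]
        have := hasDerivAt_comp3 (fun p : (Fin (m + k) → ℝ) × (Fin m → ℝ) × ℝ => α ν p.1 p.2.1 p.2.2)
          (hasDerivAt_line (c t) (Pi.single j 1) 0) (hasDerivAt_const 0 (vpart t))
          (hasDerivAt_const 0 t) (by rw [h0]; exact hαd ν _)
        rw [h0] at this
        exact this
    have hVpt : Fin.append (vpart t) (fun ν => α ν (c t) (vpart t) t) = deriv c t :=
      (hder t).symm
    have hmain := hasDerivAt_comp3 (fun p : (Fin (m + k) → ℝ) × (Fin (m + k) → ℝ) × ℝ => T p.1 p.2.1 p.2.2) (hasDerivAt_line (c t) (Pi.single j 1) 0) hVd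
      (hasDerivAt_const 0 t) (by rw [h0, hVpt]; exact hTd _)
    rw [h0, hVpt] at hmain
    have hfeq : (fun ε : ℝ => Tstar (c t + ε • (Pi.single j 1 : Fin (m+k) → ℝ)) (vpart t) t)
        = fun ε : ℝ => (fun p : (Fin (m + k) → ℝ) × (Fin (m + k) → ℝ) × ℝ => T p.1 p.2.1 p.2.2) (c t + ε • (Pi.single j 1 : Fin (m+k) → ℝ),
            Fin.append (vpart t)
              (fun ν => α ν (c t + ε • (Pi.single j 1 : Fin (m+k) → ℝ)) (vpart t) t), t) :=
      funext fun ε => hTstar _ _ _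
    rw [hfeq, hmain.deriv]
    have hsplit : ((Pi.single j 1 : Fin (m+k) → ℝ),
        (Fin.append (0 : Fin m → ℝ)
          (fun ν => fderiv ℝ (fun p : (Fin (m + k) → ℝ) × (Fin m → ℝ) × ℝ => α ν p.1 p.2.1 p.2.2) (c t, vpart t, t) (Pi.single j 1, 0, 0))), (0:ℝ))
        = ((Pi.single j 1 : Fin (m+k) → ℝ), (0 : Fin (m+k) → ℝ), (0:ℝ))
          + ((0 : Fin (m+k) → ℝ),
             (Fin.append (0 : Fin m → ℝ)
               (fun ν => fderiv ℝ (fun p : (Fin (m + k) → ℝ) × (Fin m → ℝ) × ℝ => α ν p.1 p.2.1 p.2.2) (c t, vpart t, t) (Pi.single j 1, 0, 0))), (0:ℝ)) := by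
      simp
    rw [hsplit, map_add]
    congr 1
    have hψ : ∀ w : Fin (m + k) → ℝ,
        fderiv ℝ (fun p : (Fin (m + k) → ℝ) × (Fin (m + k) → ℝ) × ℝ => T p.1 p.2.1 p.2.2) (c t, deriv c t, t) ((0 : Fin (m+k) → ℝ), w, (0:ℝ))
        = ((fderiv ℝ (fun p : (Fin (m + k) → ℝ) × (Fin (m + k) → ℝ) × ℝ => T p.1 p.2.1 p.2.2) (c t, deriv c t, t)).comp
            ((0 : (Fin (m+k) → ℝ) →L[ℝ] (Fin (m+k) → ℝ)).prod
              ((ContinuousLinearMap.id ℝ (Fin (m+k) → ℝ)).prod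
                (0 : (Fin (m+k) → ℝ) →L[ℝ] ℝ)))) w := fun w => rfl
    rw [hψ, clm_apply_append]
    simp only [Pi.zero_apply, zero_mul, Finset.sum_const_zero, zero_add]
    refine Finset.sum_congr rfl fun ν _ => ?_
    rw [← hψ (Pi.single (Fin.natAdd m ν) 1)]
  -- Claim 3: the Voronec coefficient B i ν as a total derivative
  have claim3 : ∀ ν : Fin k, B i ν
      = deriv (fun s => fderiv ℝ (fun p : (Fin (m + k) → ℝ) × (Fin m → ℝ) × ℝ => α ν p.1 p.2.1 p.2.2) (c s, vpart s, s) (0, Pi.single i 1, 0)) t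
        - fderiv ℝ (fun p : (Fin (m + k) → ℝ) × (Fin m → ℝ) × ℝ => α ν p.1 p.2.1 p.2.2) (c t, vpart t, t) (Pi.single (Fin.castAdd k i) 1, 0, 0)
        - ∑ μ : Fin k,
            fderiv ℝ (fun p : (Fin (m + k) → ℝ) × (Fin m → ℝ) × ℝ => α μ p.1 p.2.1 p.2.2) (c t, vpart t, t) (0, Pi.single i 1, 0)
            * fderiv ℝ (fun p : (Fin (m + k) → ℝ) × (Fin m → ℝ) × ℝ => α ν p.1 p.2.1 p.2.2) (c t, vpart t, t) (Pi.single (Fin.natAdd m μ) 1, 0, 0) := by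
    intro ν
    have hH1 : ContDiff ℝ 1 (fun x : (Fin (m + k) → ℝ) × (Fin m → ℝ) × ℝ => fderiv ℝ (fun p : (Fin (m + k) → ℝ) × (Fin m → ℝ) × ℝ => α ν p.1 p.2.1 p.2.2) x ((0 : Fin (m + k) → ℝ), Pi.single i 1, (0:ℝ))) :=
      contDiff_one_fderiv_apply (fun p : (Fin (m + k) → ℝ) × (Fin m → ℝ) × ℝ => α ν p.1 p.2.1 p.2.2) (hα ν) _
    have hHd : Differentiable ℝ (fun x : (Fin (m + k) → ℝ) × (Fin m → ℝ) × ℝ => fderiv ℝ (fun p : (Fin (m + k) → ℝ) × (Fin m → ℝ) × ℝ => α ν p.1 p.2.1 p.2.2) x ((0 : Fin (m + k) → ℝ), Pi.single i 1, (0:ℝ))) := hH1.differentiable one_ne_zero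
    -- second-order terms of hB as full derivatives of H
    have hq : ∀ j : Fin (m + k),
        fderiv ℝ (fun q' => fderiv ℝ (fun v' => α ν q' v' t) (vpart t) (Pi.single i 1)) (c t)
          (Pi.single j 1)
        = fderiv ℝ (fun x : (Fin (m + k) → ℝ) × (Fin m → ℝ) × ℝ => fderiv ℝ (fun p : (Fin (m + k) → ℝ) × (Fin m → ℝ) × ℝ => α ν p.1 p.2.1 p.2.2) x ((0 : Fin (m + k) → ℝ), Pi.single i 1, (0:ℝ))) (c t, vpart t, t) (Pi.single j 1, 0, 0) := by
      intro j
      have hfun : (fun q' => fderiv ℝ (fun v' => α ν q' v' t) (vpart t) (Pi.single i 1))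
          = fun q' => (fun x : (Fin (m + k) → ℝ) × (Fin m → ℝ) × ℝ => fderiv ℝ (fun p : (Fin (m + k) → ℝ) × (Fin m → ℝ) × ℝ => α ν p.1 p.2.1 p.2.2) x ((0 : Fin (m + k) → ℝ), Pi.single i 1, (0:ℝ))) (q', vpart t, t) :=
        funext fun q' => fderiv_slice2 (fun p : (Fin (m + k) → ℝ) × (Fin m → ℝ) × ℝ => α ν p.1 p.2.1 p.2.2) q' (vpart t) t (hαd ν _) _
      rw [hfun]
      exact fderiv_slice1 (fun x : (Fin (m + k) → ℝ) × (Fin m → ℝ) × ℝ => fderiv ℝ (fun p : (Fin (m + k) → ℝ) × (Fin m → ℝ) × ℝ => α ν p.1 p.2.1 p.2.2) x ((0 : Fin (m + k) → ℝ), Pi.single i 1, (0:ℝ))) (c t) (vpart t) t (hHd _) _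
    have hu : ∀ r : Fin m,
        fderiv ℝ (fun v' => fderiv ℝ (fun v'' => α ν (c t) v'' t) v' (Pi.single i 1)) (vpart t)
          (Pi.single r 1)
        = fderiv ℝ (fun x : (Fin (m + k) → ℝ) × (Fin m → ℝ) × ℝ => fderiv ℝ (fun p : (Fin (m + k) → ℝ) × (Fin m → ℝ) × ℝ => α ν p.1 p.2.1 p.2.2) x ((0 : Fin (m + k) → ℝ), Pi.single i 1, (0:ℝ))) (c t, vpart t, t) (0, Pi.single r 1, 0) := by
      intro r
      have hfun : (fun v' => fderiv ℝ (fun v'' => α ν (c t) v'' t) v' (Pi.single i 1))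
          = fun v' => (fun x : (Fin (m + k) → ℝ) × (Fin m → ℝ) × ℝ => fderiv ℝ (fun p : (Fin (m + k) → ℝ) × (Fin m → ℝ) × ℝ => α ν p.1 p.2.1 p.2.2) x ((0 : Fin (m + k) → ℝ), Pi.single i 1, (0:ℝ))) (c t, v', t) :=
        funext fun v' => fderiv_slice2 (fun p : (Fin (m + k) → ℝ) × (Fin m → ℝ) × ℝ => α ν p.1 p.2.1 p.2.2) (c t) v' t (hαd ν _) _
      rw [hfun]
      exact fderiv_slice2 (fun x : (Fin (m + k) → ℝ) × (Fin m → ℝ) × ℝ => fderiv ℝ (fun p : (Fin (m + k) → ℝ) × (Fin m → ℝ) × ℝ => α ν p.1 p.2.1 p.2.2) x ((0 : Fin (m + k) → ℝ), Pi.single i 1, (0:ℝ))) (c t) (vpart t) t (hHd _) _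
    have htm :
        deriv (fun t' => fderiv ℝ (fun v' => α ν (c t) v' t') (vpart t) (Pi.single i 1)) t
        = fderiv ℝ (fun x : (Fin (m + k) → ℝ) × (Fin m → ℝ) × ℝ => fderiv ℝ (fun p : (Fin (m + k) → ℝ) × (Fin m → ℝ) × ℝ => α ν p.1 p.2.1 p.2.2) x ((0 : Fin (m + k) → ℝ), Pi.single i 1, (0:ℝ))) (c t, vpart t, t) (0, 0, 1) := by
      have hfun : (fun t' => fderiv ℝ (fun v' => α ν (c t) v' t') (vpart t) (Pi.single i 1))
          = fun t' => (fun x : (Fin (m + k) → ℝ) × (Fin m → ℝ) × ℝ => fderiv ℝ (fun p : (Fin (m + k) → ℝ) × (Fin m → ℝ) × ℝ => α ν p.1 p.2.1 p.2.2) x ((0 : Fin (m + k) → ℝ), Pi.single i 1, (0:ℝ))) (c t, vpart t, t') :=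
        funext fun t' => fderiv_slice2 (fun p : (Fin (m + k) → ℝ) × (Fin m → ℝ) × ℝ => α ν p.1 p.2.1 p.2.2) (c t) (vpart t) t' (hαd ν _) _
      rw [hfun]
      exact deriv_slice3 (fun x : (Fin (m + k) → ℝ) × (Fin m → ℝ) × ℝ => fderiv ℝ (fun p : (Fin (m + k) → ℝ) × (Fin m → ℝ) × ℝ => α ν p.1 p.2.1 p.2.2) x ((0 : Fin (m + k) → ℝ), Pi.single i 1, (0:ℝ))) (c t) (vpart t) t (hHd _)
    -- first-order α-terms as full derivatives
    have hqα : ∀ (κ : Fin k) (j : Fin (m + k)),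
        fderiv ℝ (fun q' => α κ q' (vpart t) t) (c t) (Pi.single j 1)
        = fderiv ℝ (fun p : (Fin (m + k) → ℝ) × (Fin m → ℝ) × ℝ => α κ p.1 p.2.1 p.2.2) (c t, vpart t, t) (Pi.single j 1, 0, 0) :=
      fun κ j => fderiv_slice1 (fun p : (Fin (m + k) → ℝ) × (Fin m → ℝ) × ℝ => α κ p.1 p.2.1 p.2.2) (c t) (vpart t) t (hαd κ _) _
    -- total derivative of a ν along the motion
    have hDA : deriv (fun s => fderiv ℝ (fun p : (Fin (m + k) → ℝ) × (Fin m → ℝ) × ℝ => α ν p.1 p.2.1 p.2.2) (c s, vpart s, s) (0, Pi.single i 1, 0)) t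
        = fderiv ℝ (fun x : (Fin (m + k) → ℝ) × (Fin m → ℝ) × ℝ => fderiv ℝ (fun p : (Fin (m + k) → ℝ) × (Fin m → ℝ) × ℝ => α ν p.1 p.2.1 p.2.2) x ((0 : Fin (m + k) → ℝ), Pi.single i 1, (0:ℝ))) (c t, vpart t, t)
            (deriv c t, (fun r => deriv (fun τ => deriv c τ (Fin.castAdd k r)) t), 1) := by
      exact (hasDerivAt_comp3 (fun x : (Fin (m + k) → ℝ) × (Fin m → ℝ) × ℝ => fderiv ℝ (fun p : (Fin (m + k) → ℝ) × (Fin m → ℝ) × ℝ => α ν p.1 p.2.1 p.2.2) x ((0 : Fin (m + k) → ℝ), Pi.single i 1, (0:ℝ))) (hcd t).hasDerivAt hu2 (hasDerivAt_id t)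
        (hHd _)).deriv
    have hsplit : ((deriv c t : Fin (m + k) → ℝ),
          (fun r => deriv (fun τ => deriv c τ (Fin.castAdd k r)) t : Fin m → ℝ), (1:ℝ))
        = ((deriv c t : Fin (m + k) → ℝ), (0 : Fin m → ℝ), (0:ℝ))
          + ((0 : Fin (m + k) → ℝ),
             (fun r => deriv (fun τ => deriv c τ (Fin.castAdd k r)) t : Fin m → ℝ), (0:ℝ))
          + ((0 : Fin (m + k) → ℝ), (0 : Fin m → ℝ), (1:ℝ)) := by
      simp
    have hslot1 : fderiv ℝ (fun x : (Fin (m + k) → ℝ) × (Fin m → ℝ) × ℝ => fderiv ℝ (fun p : (Fin (m + k) → ℝ) × (Fin m → ℝ) × ℝ => α ν p.1 p.2.1 p.2.2) x ((0 : Fin (m + k) → ℝ), Pi.single i 1, (0:ℝ))) (c t, vpart t, t)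
          ((deriv c t : Fin (m + k) → ℝ), (0 : Fin m → ℝ), (0:ℝ))
        = ∑ r : Fin m, vpart t r
            * fderiv ℝ (fun x : (Fin (m + k) → ℝ) × (Fin m → ℝ) × ℝ => fderiv ℝ (fun p : (Fin (m + k) → ℝ) × (Fin m → ℝ) × ℝ => α ν p.1 p.2.1 p.2.2) x ((0 : Fin (m + k) → ℝ), Pi.single i 1, (0:ℝ))) (c t, vpart t, t) (Pi.single (Fin.castAdd k r) 1, 0, 0)
          + ∑ μ : Fin k, α μ (c t) (vpart t) t
            * fderiv ℝ (fun x : (Fin (m + k) → ℝ) × (Fin m → ℝ) × ℝ => fderiv ℝ (fun p : (Fin (m + k) → ℝ) × (Fin m → ℝ) × ℝ => α ν p.1 p.2.1 p.2.2) x ((0 : Fin (m + k) → ℝ), Pi.single i 1, (0:ℝ))) (c t, vpart t, t) (Pi.single (Fin.natAdd m μ) 1, 0, 0) := by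
      have hφ : ∀ w : Fin (m + k) → ℝ,
          fderiv ℝ (fun x : (Fin (m + k) → ℝ) × (Fin m → ℝ) × ℝ => fderiv ℝ (fun p : (Fin (m + k) → ℝ) × (Fin m → ℝ) × ℝ => α ν p.1 p.2.1 p.2.2) x ((0 : Fin (m + k) → ℝ), Pi.single i 1, (0:ℝ))) (c t, vpart t, t) (w, (0 : Fin m → ℝ), (0:ℝ))
          = ((fderiv ℝ (fun x : (Fin (m + k) → ℝ) × (Fin m → ℝ) × ℝ => fderiv ℝ (fun p : (Fin (m + k) → ℝ) × (Fin m → ℝ) × ℝ => α ν p.1 p.2.1 p.2.2) x ((0 : Fin (m + k) → ℝ), Pi.single i 1, (0:ℝ))) (c t, vpart t, t)).comp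
              ((ContinuousLinearMap.id ℝ (Fin (m + k) → ℝ)).prod
                (0 : (Fin (m + k) → ℝ) →L[ℝ] (Fin m → ℝ) × ℝ))) w := fun w => rfl
      rw [hφ, clm_apply_pi, Fin.sum_univ_add]
      congr 1
      · refine Finset.sum_congr rfl fun r _ => ?_
        rw [← hφ (Pi.single (Fin.castAdd k r) 1), ← hvpart t r]
      · refine Finset.sum_congr rfl fun μ _ => ?_
        rw [← hφ (Pi.single (Fin.natAdd m μ) 1), hconstr t μ]
    have hslot2 : fderiv ℝ (fun x : (Fin (m + k) → ℝ) × (Fin m → ℝ) × ℝ => fderiv ℝ (fun p : (Fin (m + k) → ℝ) × (Fin m → ℝ) × ℝ => α ν p.1 p.2.1 p.2.2) x ((0 : Fin (m + k) → ℝ), Pi.single i 1, (0:ℝ))) (c t, vpart t, t)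
          ((0 : Fin (m + k) → ℝ),
           (fun r => deriv (fun τ => deriv c τ (Fin.castAdd k r)) t : Fin m → ℝ), (0:ℝ))
        = ∑ r : Fin m, deriv (fun τ => deriv c τ (Fin.castAdd k r)) t
            * fderiv ℝ (fun x : (Fin (m + k) → ℝ) × (Fin m → ℝ) × ℝ => fderiv ℝ (fun p : (Fin (m + k) → ℝ) × (Fin m → ℝ) × ℝ => α ν p.1 p.2.1 p.2.2) x ((0 : Fin (m + k) → ℝ), Pi.single i 1, (0:ℝ))) (c t, vpart t, t) (0, Pi.single r 1, 0) := by
      have hφ : ∀ w : Fin m → ℝ,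
          fderiv ℝ (fun x : (Fin (m + k) → ℝ) × (Fin m → ℝ) × ℝ => fderiv ℝ (fun p : (Fin (m + k) → ℝ) × (Fin m → ℝ) × ℝ => α ν p.1 p.2.1 p.2.2) x ((0 : Fin (m + k) → ℝ), Pi.single i 1, (0:ℝ))) (c t, vpart t, t) ((0 : Fin (m + k) → ℝ), w, (0:ℝ))
          = ((fderiv ℝ (fun x : (Fin (m + k) → ℝ) × (Fin m → ℝ) × ℝ => fderiv ℝ (fun p : (Fin (m + k) → ℝ) × (Fin m → ℝ) × ℝ => α ν p.1 p.2.1 p.2.2) x ((0 : Fin (m + k) → ℝ), Pi.single i 1, (0:ℝ))) (c t, vpart t, t)).comp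
              ((0 : (Fin m → ℝ) →L[ℝ] (Fin (m + k) → ℝ)).prod
                ((ContinuousLinearMap.id ℝ (Fin m → ℝ)).prod
                  (0 : (Fin m → ℝ) →L[ℝ] ℝ)))) w := fun w => rfl
      rw [hφ, clm_apply_pi]
      refine Finset.sum_congr rfl fun r _ => ?_
      rw [← hφ (Pi.single r 1)]
    rw [hB i ν, hDA, hsplit, map_add, map_add, hslot1, hslot2]
    simp only [hq, hu, htm, hqα, has]
    simp only [Finset.sum_add_distrib, Finset.sum_sub_distrib]
    simp only [mul_comm]
    ring_nf

  -- differentiability of momenta and of a ν along the motion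
  have hxdiff : DifferentiableAt ℝ (fun s => ((c s, deriv c s, s) : (Fin (m+k) → ℝ) × (Fin (m+k) → ℝ) × ℝ)) t :=
    (hcd t).prodMk ((hdcd t).prodMk differentiableAt_id)
  have hydiff : DifferentiableAt ℝ (fun s => ((c s, vpart s, s) : (Fin (m+k) → ℝ) × (Fin m → ℝ) × ℝ)) t :=
    (hcd t).prodMk ((hvpD t).prodMk differentiableAt_id)
  have hPdiff : ∀ j : Fin (m + k), DifferentiableAt ℝ
      (fun s => fderiv ℝ (fun p : (Fin (m + k) → ℝ) × (Fin (m + k) → ℝ) × ℝ => T p.1 p.2.1 p.2.2) (c s, deriv c s, s) (0, Pi.single j 1, 0)) t :=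
    fun j => (((contDiff_one_fderiv_apply (fun p : (Fin (m + k) → ℝ) × (Fin (m + k) → ℝ) × ℝ => T p.1 p.2.1 p.2.2) hT (0, Pi.single j 1, 0)).differentiable
      one_ne_zero) _).comp t hxdiff
  have hAdiff : ∀ ν : Fin k, DifferentiableAt ℝ
      (fun s => fderiv ℝ (fun p : (Fin (m + k) → ℝ) × (Fin m → ℝ) × ℝ => α ν p.1 p.2.1 p.2.2) (c s, vpart s, s) (0, Pi.single i 1, 0)) t :=
    fun ν => (((contDiff_one_fderiv_apply (fun p : (Fin (m + k) → ℝ) × (Fin m → ℝ) × ℝ => α ν p.1 p.2.1 p.2.2) (hα ν) (0, Pi.single i 1, 0)).differentiable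
      one_ne_zero) _).comp t hydiff
  -- Claim 4: derivative of the constrained momentum
  have claim4 :
      deriv (fun s => fderiv ℝ (fun u' => Tstar (c s) u' s) (vpart s) (Pi.single i 1)) t
      = deriv (fun s => fderiv ℝ (fun p : (Fin (m + k) → ℝ) × (Fin (m + k) → ℝ) × ℝ => T p.1 p.2.1 p.2.2) (c s, deriv c s, s) (0, Pi.single (Fin.castAdd k i) 1, 0)) t
        + ∑ ν : Fin k,
            (deriv (fun s => fderiv ℝ (fun p : (Fin (m + k) → ℝ) × (Fin m → ℝ) × ℝ => α ν p.1 p.2.1 p.2.2) (c s, vpart s, s) (0, Pi.single i 1, 0)) t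
              * fderiv ℝ (fun p : (Fin (m + k) → ℝ) × (Fin (m + k) → ℝ) × ℝ => T p.1 p.2.1 p.2.2) (c t, deriv c t, t) (0, Pi.single (Fin.natAdd m ν) 1, 0)
            + fderiv ℝ (fun p : (Fin (m + k) → ℝ) × (Fin m → ℝ) × ℝ => α ν p.1 p.2.1 p.2.2) (c t, vpart t, t) (0, Pi.single i 1, 0)
              * deriv (fun s => fderiv ℝ (fun p : (Fin (m + k) → ℝ) × (Fin (m + k) → ℝ) × ℝ => T p.1 p.2.1 p.2.2) (c s, deriv c s, s) (0, Pi.single (Fin.natAdd m ν) 1, 0)) t) := by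
    have hfun : (fun s => fderiv ℝ (fun u' => Tstar (c s) u' s) (vpart s) (Pi.single i 1))
        = fun s => fderiv ℝ (fun p : (Fin (m + k) → ℝ) × (Fin (m + k) → ℝ) × ℝ => T p.1 p.2.1 p.2.2) (c s, deriv c s, s) (0, Pi.single (Fin.castAdd k i) 1, 0)
          + ∑ ν : Fin k,
              fderiv ℝ (fun p : (Fin (m + k) → ℝ) × (Fin m → ℝ) × ℝ => α ν p.1 p.2.1 p.2.2) (c s, vpart s, s) (0, Pi.single i 1, 0)
              * fderiv ℝ (fun p : (Fin (m + k) → ℝ) × (Fin (m + k) → ℝ) × ℝ => T p.1 p.2.1 p.2.2) (c s, deriv c s, s) (0, Pi.single (Fin.natAdd m ν) 1, 0) :=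
      funext claim1
    rw [hfun]
    rw [deriv_fun_add (hPdiff _) (DifferentiableAt.fun_sum fun ν _ => ((hAdiff ν).fun_mul (hPdiff _)))]
    congr 1
    rw [deriv_fun_sum (fun ν _ => ((hAdiff ν).fun_mul (hPdiff _)))]
    exact Finset.sum_congr rfl fun ν _ => deriv_fun_mul (hAdiff ν) (hPdiff _)
  -- rewrite goal's derivative-of-momentum functions
  have hpfun : ∀ j : Fin (m + k),
      (fun s => fderiv ℝ (fun v' => T (c s) v' s) (deriv c s) (Pi.single j 1))
      = fun s => fderiv ℝ (fun p : (Fin (m + k) → ℝ) × (Fin (m + k) → ℝ) × ℝ => T p.1 p.2.1 p.2.2) (c s, deriv c s, s) (0, Pi.single j 1, 0) :=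
    fun j => funext fun s => hps s j
  rw [hpfun (Fin.castAdd k i), claim4]
  simp only [hpfun, hfq, has, hps, claim2, claim3]
  exact voronec_algebra k _ _ _ _ _ _ _ _ _
end
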